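/- Let S be a finite set of positive reals closed under the operation a ⊕ b = min(a+b, max S) (so that (S, ⊕) is well-defined). If every induced cycle of a countable S-edge-labelled complete-graph-partial structure A (i.e., a structure where some pairs are assigned distances from S) satisfies the metric (polygon) inequality, and every one- and two-element substructure of A is an S-metric space, then A can be completed to an S-metric space: there is an assignment of distances from S to all unassigned pairs making A a metric space with distances in S. -/

import Mathlib

namespace SMC

variable {V : Type} (p : V → V → Option ℝ)

noncomputable def dw (a b : V) : ℝ := (p a b).getD 0

def Wk (x y : V) (n : ℕ) (w : ℕ → V) : Prop :=
  w 0 = x ∧ w n = y ∧ ∀ i < n, (p (w i) (w (i+1))).isSome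

noncomputable def wt (n : ℕ) (w : ℕ → V) : ℝ :=
  ∑ i ∈ Finset.range n, dw p (w i) (w (i+1))

lemma edge_some {a b : V} (h : (p a b).isSome) : p a b = some (dw p a b) := by
  rcases Option.isSome_iff_exists.mp h with ⟨v, hv⟩
  simp [dw, hv]

lemma splice (hd0 : ∀ a b : V, 0 ≤ dw p a b)
    {x y : V} {v : ℝ} (n i t : ℕ) (w : ℕ → V)
    (ht : 1 ≤ t) (hit : i + t ≤ n)
    (hwk : Wk p x y n w)
    (hy : i + t = n → w i = y)
    (hedge : i + t < n → (p (w i) (w (i + 1 + t))).isSome)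
    (hbound : i + t < n →
      dw p (w i) (w (i + 1 + t)) ≤ ∑ k ∈ Finset.Ico i (i + t + 1), dw p (w k) (w (k+1)))
    (IH : ∀ m, m < n → ∀ w' : ℕ → V, Wk p x y m w' → v ≤ wt p m w') :
    v ≤ wt p n w := by
  obtain ⟨h0, hn, he⟩ := hwk
  set w' : ℕ → V := fun k => if k ≤ i then w k else w (k + t) with hw'
  have hn' : n - t < n := by omega
  have hwk' : Wk p x y (n - t) w' := by
    refine ⟨by simp [hw', h0], ?_, ?_⟩
    · rcases eq_or_lt_of_le hit with hq | hq
      · have hq2 : n - t = i := by omega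
        rw [hq2]; simpa [hw'] using hy hq
      · have h1 : ¬ (n - t ≤ i) := by omega
        simp only [hw', h1, if_false]
        have h2 : n - t + t = n := by omega
        rw [h2, hn]
    · intro k hk
      rcases lt_trichotomy k i with h | h | h
      · have e1 : w' k = w k := if_pos (by omega)
        have e2 : w' (k+1) = w (k+1) := if_pos (by omega)
        rw [e1, e2]; exact he k (by omega)
      · subst h
        have e1 : w' k = w k := if_pos le_rfl
        have e2 : w' (k+1) = w (k + 1 + t) := if_neg (by omega)
        rw [e1, e2]; exact hedge (by omega)
      · have e1 : w' k = w (k + t) := if_neg (by omega)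
        have e2 : w' (k+1) = w (k + 1 + t) := if_neg (by omega)
        rw [e1, e2]
        have e3 : k + 1 + t = (k + t) + 1 := by omega
        rw [e3]
        exact he (k + t) (by omega)
  refine (IH (n - t) hn' w' hwk').trans ?_
  rcases eq_or_lt_of_le hit with hq | hq
  · -- n - t = i, prefix sum
    have hq2 : n - t = i := by omega
    unfold wt
    rw [hq2]
    have hpref : ∀ k ∈ Finset.range i, dw p (w' k) (w' (k+1)) = dw p (w k) (w (k+1)) := by
      intro k hk
      rw [Finset.mem_range] at hk
      rw [show w' k = w k from if_pos (by omega), show w' (k+1) = w (k+1) from if_pos (by omega)]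
    rw [Finset.sum_congr rfl hpref]
    refine Finset.sum_le_sum_of_subset_of_nonneg ?_ (fun j _ _ => hd0 _ _)
    exact Finset.range_subset_range.mpr (by omega)
  · -- i + t < n
    set n' := n - t with hn'def
    have hin' : i + 1 ≤ n' := by omega
    unfold wt
    have lhs :
        ∑ k ∈ Finset.range n', dw p (w' k) (w' (k+1))
          = (∑ k ∈ Finset.range i, dw p (w k) (w (k+1)))
            + dw p (w i) (w (i + 1 + t))
            + ∑ k ∈ Finset.Ico (i+1+t) n, dw p (w k) (w (k+1)) := by
      rw [Finset.range_eq_Ico, ← Finset.sum_Ico_consecutive _ (Nat.zero_le (i+1)) hin']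
      congr 1
      · rw [← Finset.range_eq_Ico, Finset.sum_range_succ]
        congr 1
        · exact Finset.sum_congr rfl fun k hk => by
            rw [Finset.mem_range] at hk
            rw [show w' k = w k from if_pos (by omega),
              show w' (k+1) = w (k+1) from if_pos (by omega)]
        · rw [show w' i = w i from if_pos le_rfl,
            show w' (i+1) = w (i + 1 + t) from if_neg (by omega)]
      · rw [Finset.sum_Ico_eq_sum_range, Finset.sum_Ico_eq_sum_range]
        have hcard : n' - (i+1) = n - (i+1+t) := by omega
        rw [hcard]
        refine Finset.sum_congr rfl fun j hj => ?_
        rw [Finset.mem_range] at hj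
        rw [show w' (i+1+j) = w (i+1+j+t) from if_neg (by omega),
          show w' (i+1+j+1) = w (i+1+j+1+t) from if_neg (by omega),
          show i+1+j+t = i+1+t+j by omega, show i+1+j+1+t = i+1+t+j+1 by omega]
    rw [lhs, Finset.range_eq_Ico n,
      ← Finset.sum_Ico_consecutive (fun k => dw p (w k) (w (k+1)))
        (show (0:ℕ) ≤ i+t+1 by omega) (show i+t+1 ≤ n by omega),
      ← Finset.sum_Ico_consecutive (fun k => dw p (w k) (w (k+1))) (Nat.zero_le i) (show i ≤ i+t+1 by omega)]
    have : i + t + 1 = i + 1 + t := by omega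
    rw [this]
    have hb := hbound hq
    rw [show i + t + 1 = i + 1 + t by omega] at hb
    have : ∑ k ∈ Finset.Ico 0 i, dw p (w k) (w (k+1))
        = ∑ k ∈ Finset.range i, dw p (w k) (w (k+1)) := by rw [Finset.range_eq_Ico]
    linarith [hb]

lemma cycle_bound
    (hsym : ∀ x y, p x y = p y x)
    (hcyc : ∀ (ℓ : ℕ) (v : ZMod ℓ → V) (dd : ZMod ℓ → ℝ),
      3 ≤ ℓ → Function.Injective v →
      (∀ i, p (v i) (v (i + 1)) = some (dd i)) →
      (∀ i j : ZMod ℓ, i ≠ j → j ≠ i + 1 → i ≠ j + 1 → p (v i) (v j) = none) →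
      ∀ i : ℕ, i < ℓ →
        dd (i : ZMod ℓ) ≤ ∑ j ∈ (Finset.range ℓ).erase i, dd (j : ZMod ℓ))
    (w : ℕ → V) (a b : ℕ) (hab : a + 2 ≤ b)
    (hinj : ∀ s t, a ≤ s → s ≤ b → a ≤ t → t ≤ b → w s = w t → s = t)
    (hedges : ∀ k, a ≤ k → k < b → (p (w k) (w (k+1))).isSome)
    (c : ℝ) (hc : p (w b) (w a) = some c)
    (hnone : ∀ s t, a ≤ s → s + 2 ≤ t → t ≤ b → ¬(s = a ∧ t = b) → p (w s) (w t) = none) :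
    c ≤ ∑ k ∈ Finset.Ico a b, dw p (w k) (w (k+1)) := by
  set m := b - a with hm
  have hm2 : 2 ≤ m := by omega
  set ℓ := m + 1 with hℓ
  haveI : NeZero ℓ := ⟨Nat.succ_ne_zero m⟩
  have hval1 : (1 : ZMod ℓ).val = 1 := by
    rw [ZMod.val_one_eq_one_mod]; exact Nat.mod_eq_of_lt (by omega)
  have hvalsucc : ∀ i : ZMod ℓ, (i + 1).val = (i.val + 1) % ℓ := by
    intro i; rw [ZMod.val_add, hval1]
  have hvallt : ∀ i : ZMod ℓ, i.val < ℓ := fun i => ZMod.val_lt i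
  set vs : ZMod ℓ → V := fun i => w (a + i.val) with hvs
  set ds : ZMod ℓ → ℝ := fun i => if i.val = m then c else dw p (w (a + i.val)) (w (a + i.val + 1)) with hds
  have hinjvs : Function.Injective vs := by
    intro i j hij
    have h1 := hvallt i
    have h2 := hvallt j
    have := hinj (a + i.val) (a + j.val) (by omega) (by omega) (by omega) (by omega) hij
    exact ZMod.val_injective ℓ (by omega)
  have hedgevs : ∀ i, p (vs i) (vs (i + 1)) = some (ds i) := by
    intro i
    have h1 := hvallt i
    by_cases hi : i.val = m
    · have hsv : (i + 1).val = 0 := by rw [hvalsucc, hi]; simp [hℓ]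
      have e1 : vs i = w b := by simp only [hvs]; rw [hi]; congr 1; omega
      have e2 : vs (i + 1) = w a := by
        show w (a + (i+1).val) = w a
        rw [hsv, Nat.add_zero]
      rw [e1, e2, hc, hds]; simp [hi]
    · have hsv : (i + 1).val = i.val + 1 := by
        rw [hvalsucc]; exact Nat.mod_eq_of_lt (by omega)
      have e2 : vs (i + 1) = w (a + i.val + 1) := by
        show w (a + (i+1).val) = w (a + i.val + 1)
        rw [hsv, ← Nat.add_assoc]
      have e1 : vs i = w (a + i.val) := rfl
      rw [e1, e2]
      have := edge_some p (hedges (a + i.val) (by omega) (by omega))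
      rw [this, hds]; simp [hi]
  -- chords
  have hchord : ∀ i j : ZMod ℓ, i ≠ j → j ≠ i + 1 → i ≠ j + 1 → i.val < j.val →
      p (vs i) (vs j) = none := by
    intro i j hij hji1 hij1 hvlt
    have h1 := hvallt i
    have h2 := hvallt j
    have hne1 : j.val ≠ i.val + 1 := by
      intro h
      apply hji1
      apply ZMod.val_injective ℓ
      rw [hvalsucc, Nat.mod_eq_of_lt (by omega), h]
    have hne2 : ¬(i.val = 0 ∧ j.val = m) := by
      rintro ⟨hi0, hjm⟩
      apply hij1
      apply ZMod.val_injective ℓ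
      rw [hvalsucc, hjm, hi0]; simp [hℓ]
    simp only [hvs]
    apply hnone (a + i.val) (a + j.val) (by omega) (by omega) (by omega)
    omega
  have hchords : ∀ i j : ZMod ℓ, i ≠ j → j ≠ i + 1 → i ≠ j + 1 → p (vs i) (vs j) = none := by
    intro i j hij hji1 hij1
    rcases lt_trichotomy i.val j.val with h | h | h
    · exact hchord i j hij hji1 hij1 h
    · exact absurd (ZMod.val_injective ℓ h) hij
    · rw [hsym]; exact hchord j i (Ne.symm hij) hij1 hji1 h
  have hmain := hcyc ℓ vs ds (by omega) hinjvs hedgevs hchords m (by omega)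
  have hcastm : ((m : ZMod ℓ)).val = m := ZMod.val_cast_of_lt (by omega)
  have hlhs : ds ((m : ℕ) : ZMod ℓ) = c := by rw [hds]; simp [hcastm]
  have herase : (Finset.range ℓ).erase m = Finset.range m := by
    rw [hℓ, Finset.range_add_one, Finset.erase_insert (by simp)]
  rw [hlhs, herase] at hmain
  refine hmain.trans (le_of_eq ?_)
  rw [Finset.sum_Ico_eq_sum_range]
  rw [show b - a = m from rfl]
  refine Finset.sum_congr rfl fun j hj => ?_
  rw [Finset.mem_range] at hj
  have hcj : ((j : ZMod ℓ)).val = j := ZMod.val_cast_of_lt (by omega)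
  rw [hds]; simp only [hcj]
  rw [if_neg (by omega)]
lemma key
    (hsym : ∀ x y, p x y = p y x) (hirr : ∀ x, p x x = none)
    (hd0 : ∀ a b : V, 0 ≤ dw p a b)
    (hcyc : ∀ (ℓ : ℕ) (v : ZMod ℓ → V) (dd : ZMod ℓ → ℝ),
      3 ≤ ℓ → Function.Injective v →
      (∀ i, p (v i) (v (i + 1)) = some (dd i)) →
      (∀ i j : ZMod ℓ, i ≠ j → j ≠ i + 1 → i ≠ j + 1 → p (v i) (v j) = none) →
      ∀ i : ℕ, i < ℓ →
        dd (i : ZMod ℓ) ≤ ∑ j ∈ (Finset.range ℓ).erase i, dd (j : ZMod ℓ)) :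
    ∀ (n : ℕ) (x y : V) (v : ℝ) (w : ℕ → V),
      p x y = some v → Wk p x y n w → v ≤ wt p n w := by
  intro n
  induction n using Nat.strong_induction_on with
  | _ n IH =>
  intro x y v w hp hwk
  obtain ⟨h0, hn, he⟩ := hwk
  have hxy : x ≠ y := by
    intro h; rw [h, hirr] at hp; exact Option.some_ne_none v hp.symm
  have hn0 : n ≠ 0 := by
    intro h; exact hxy (by rw [← h0, ← hn, h])
  rcases eq_or_ne n 1 with hn1 | hn1
  · -- single edge
    subst hn1
    unfold wt
    rw [Finset.sum_range_one]
    have : p (w 0) (w 1) = p x y := by rw [h0, hn]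
    rw [dw, this, hp]
    simp
  -- n ≥ 2
  have hIH : ∀ m, m < n → ∀ w' : ℕ → V, Wk p x y m w' → v ≤ wt p m w' :=
    fun m hm w' hw' => IH m hm x y v w' hp hw'
  by_cases hrep : ∃ s t, s < t ∧ t ≤ n ∧ w s = w t
  · obtain ⟨s, t, hst, htn, hws⟩ := hrep
    have hnot0n : ¬(s = 0 ∧ t = n) := by
      rintro ⟨rfl, rfl⟩
      exact hxy (by rw [← h0, ← hn]; exact hws)
    refine splice p hd0 n s (t - s) w (by omega) (by omega) ⟨h0, hn, he⟩ ?_ ?_ ?_ hIH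
    · intro hq
      rw [hws]
      have : t = n := by omega
      rw [this, hn]
    · intro hq
      have harg : s + 1 + (t - s) = t + 1 := by omega
      rw [harg, hws]
      exact he t (by omega)
    · intro hq
      have harg : s + 1 + (t - s) = t + 1 := by omega
      rw [harg, hws]
      have hmem : t ∈ Finset.Ico s (s + (t - s) + 1) := by
        rw [Finset.mem_Ico]; omega
      exact Finset.single_le_sum (f := fun k => dw p (w k) (w (k+1)))
        (fun k _ => hd0 _ _) hmem
  · push_neg at hrep
    have hinj : ∀ s t, s ≤ n → t ≤ n → w s = w t → s = t := by
      intro s t hs ht h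
      by_contra hne
      rcases Nat.lt_or_ge s t with hlt | hge
      · exact hrep s t hlt ht h
      · have : t < s := by omega
        exact hrep t s this hs h.symm
    by_cases hch : ∃ s t, s + 2 ≤ t ∧ t ≤ n ∧ ¬(s = 0 ∧ t = n) ∧ (p (w s) (w t)).isSome
    · -- minimal-span chord
      classical
      have hP : ∃ m, ∃ s t, t - s = m ∧ s + 2 ≤ t ∧ t ≤ n ∧ ¬(s = 0 ∧ t = n) ∧
          (p (w s) (w t)).isSome := by
        obtain ⟨s, t, h1, h2, h3, h4⟩ := hch
        exact ⟨t - s, s, t, rfl, h1, h2, h3, h4⟩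
      obtain ⟨a, b, hba, hab2, hbn, hnab, hsome⟩ := Nat.find_spec hP
      have hmin : ∀ s t, s + 2 ≤ t → t ≤ n → ¬(s = 0 ∧ t = n) →
          (p (w s) (w t)).isSome → b - a ≤ t - s := by
        intro s t h1 h2 h3 h4
        rw [hba]
        exact Nat.find_min' hP ⟨s, t, rfl, h1, h2, h3, h4⟩
      have hcb : dw p (w a) (w b) ≤ ∑ k ∈ Finset.Ico a b, dw p (w k) (w (k+1)) := by
        refine cycle_bound p hsym hcyc w a b hab2 ?_ ?_ _ ?_ ?_
        · intro s t hs hsb ht htb h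
          exact hinj s t (by omega) (by omega) h
        · intro k hk1 hk2; exact he k (by omega)
        · rw [hsym]; exact edge_some p hsome
        · intro s t hs hst htb hsab
          by_contra hne
          have hsome' : (p (w s) (w t)).isSome :=
            Option.ne_none_iff_isSome.mp hne
          by_cases h0n : s = 0 ∧ t = n
          · obtain ⟨rfl, rfl⟩ := h0n
            exact hsab ⟨by omega, by omega⟩
          · have := hmin s t hst (by omega) h0n hsome'
            omega
      refine splice p hd0 n a (b - a - 1) w (by omega) (by omega) ⟨h0, hn, he⟩ ?_ ?_ ?_ hIH
      · intro hq; omega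
      · intro hq
        have harg : a + 1 + (b - a - 1) = b := by omega
        rw [harg]; exact hsome
      · intro hq
        have harg : a + 1 + (b - a - 1) = b := by omega
        have harg2 : a + (b - a - 1) + 1 = b := by omega
        rw [harg, harg2]; exact hcb
    · -- no chords: whole walk plus (x,y) edge is an induced cycle
      push_neg at hch
      have hv : v ≤ ∑ k ∈ Finset.Ico 0 n, dw p (w k) (w (k+1)) := by
        refine cycle_bound p hsym hcyc w 0 n (by omega) ?_ ?_ v ?_ ?_
        · intro s t _ hsb _ htb h; exact hinj s t hsb htb h
        · intro k _ hk; exact he k hk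
        · rw [hn, h0, hsym]; exact hp
        · intro s t _ hst htb hsab
          have := hch s t hst htb (by tauto)
          exact Option.not_isSome_iff_eq_none.mp this
      unfold wt
      rw [Finset.range_eq_Ico]
      exact hv


end SMC

/-- Let `S` be a finite set of positive reals closed under `a ⊕ b = min (a + b) (max S)`.
If every induced cycle of a countable partial `S`-metric space satisfies the polygon
inequality (no induced cycle is non-metric) and every one- and two-element substructure
is an `S`-metric space (all assigned distances lie in `S`), then the partial space can be
completed to a metric space with all distances of distinct points in `S`. -/
theorem S_metric_completion (S : Finset ℝ) (hne : S.Nonempty) (hpos : ∀ s ∈ S, 0 < s)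
    (hclosed : ∀ a ∈ S, ∀ b ∈ S, min (a + b) (S.max' hne) ∈ S)
    (V : Type) [Countable V] (p : V → V → Option ℝ)
    (hsym : ∀ x y, p x y = p y x) (hirr : ∀ x, p x x = none)
    (hS : ∀ x y v, p x y = some v → v ∈ S)
    (hcyc : ∀ (ℓ : ℕ) (v : ZMod ℓ → V) (dd : ZMod ℓ → ℝ),
      3 ≤ ℓ → Function.Injective v →
      (∀ i, p (v i) (v (i + 1)) = some (dd i)) →
      (∀ i j : ZMod ℓ, i ≠ j → j ≠ i + 1 → i ≠ j + 1 → p (v i) (v j) = none) →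
      ∀ i : ℕ, i < ℓ →
        dd (i : ZMod ℓ) ≤ ∑ j ∈ (Finset.range ℓ).erase i, dd (j : ZMod ℓ)) :
    ∃ D : V → V → ℝ,
      (∀ x y, D x y = D y x) ∧
      (∀ x y, D x y = 0 ↔ x = y) ∧
      (∀ x y, x ≠ y → D x y ∈ (S : Set ℝ)) ∧
      (∀ x y z, D x z ≤ D x y + D y z) ∧
      (∀ x y v, p x y = some v → D x y = v) := by
  classical
  set M := S.max' hne with hMdef
  have hM : M ∈ S := S.max'_mem hne
  have hleM : ∀ s ∈ S, s ≤ M := fun s hs => S.le_max' s hs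
  have hM0 : 0 < M := hpos M hM
  have hd0 : ∀ a b, 0 ≤ SMC.dw p a b := by
    intro a b
    unfold SMC.dw
    cases h : p a b with
    | none => simp
    | some v => simpa using (hpos v (hS a b v h)).le
  have hdS : ∀ a b : V, (p a b).isSome → SMC.dw p a b ∈ S := by
    intro a b h
    exact hS a b _ (SMC.edge_some p h)
  have hdsymm : ∀ a b : V, SMC.dw p a b = SMC.dw p b a := by
    intro a b; unfold SMC.dw; rw [hsym]
  set A : V → V → Set ℝ := fun x y =>
    {r | r = M ∨ ∃ n w, SMC.Wk p x y n w ∧ 1 ≤ n ∧ r = min (SMC.wt p n w) M} with hA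
  have hAmem : ∀ (x y : V) (r : ℝ), r ∈ A x y ↔
      (r = M ∨ ∃ n w, SMC.Wk p x y n w ∧ 1 ≤ n ∧ r = min (SMC.wt p n w) M) := by
    intro x y r; rw [hA]; rfl
  have hwtS : ∀ n, 1 ≤ n → ∀ w : ℕ → V, (∀ i < n, (p (w i) (w (i+1))).isSome) →
      min (SMC.wt p n w) M ∈ S := by
    intro n hn
    induction n, hn using Nat.le_induction with
    | base =>
      intro w hw
      unfold SMC.wt
      rw [Finset.sum_range_one]
      have h1 := hdS _ _ (hw 0 (by omega))
      rw [min_eq_left (hleM _ h1)]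
      exact h1
    | succ n hn IH =>
      intro w hw
      have h1 := IH w (fun i hi => hw i (by omega))
      have h2 := hdS (w n) (w (n+1)) (hw n (by omega))
      have hkey : min (SMC.wt p (n+1) w) M
          = min (min (SMC.wt p n w) M + SMC.dw p (w n) (w (n+1))) M := by
        unfold SMC.wt
        rw [Finset.sum_range_succ]
        rcases le_total (∑ i ∈ Finset.range n, SMC.dw p (w i) (w (i+1))) M with h | h
        · rw [min_eq_left h]
        · have e0 := hd0 (w n) (w (n+1))
          rw [min_eq_right h, min_eq_right (by linarith), min_eq_right (by linarith)]
      rw [hkey]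
      exact hclosed _ h1 _ h2
  have hAS : ∀ x y, A x y ⊆ (S : Set ℝ) := by
    intro x y r hr
    rw [hAmem] at hr
    rcases hr with rfl | ⟨n, w, hwk, hn, rfl⟩
    · exact hM
    · exact hwtS n hn w hwk.2.2
  have hAne : ∀ x y, (A x y).Nonempty := fun x y => ⟨M, (hAmem x y M).mpr (Or.inl rfl)⟩
  have hAfin : ∀ x y, (A x y).Finite := fun x y => S.finite_toSet.subset (hAS x y)
  set D : V → V → ℝ := fun x y => if x = y then 0 else sInf (A x y) with hD
  have hmem : ∀ x y, sInf (A x y) ∈ A x y := fun x y => (hAne x y).csInf_mem (hAfin x y)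
  have hinfle : ∀ x y r, r ∈ A x y → sInf (A x y) ≤ r :=
    fun x y r hr => csInf_le (hAfin x y).bddBelow hr
  have hDS : ∀ x y, x ≠ y → D x y ∈ (S : Set ℝ) := by
    intro x y h
    show (if x = y then 0 else sInf (A x y)) ∈ (S : Set ℝ)
    rw [if_neg h]
    exact hAS x y (hmem x y)
  have hDnn : ∀ x y, 0 ≤ D x y := by
    intro x y
    by_cases h : x = y
    · show (if x = y then 0 else sInf (A x y)) ≥ 0
      rw [if_pos h]
    · exact (hpos _ (hDS x y h)).le
  -- symmetry
  have hAsub : ∀ x y : V, A x y ⊆ A y x := by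
    intro x y r hr
    rw [hAmem] at hr
    rw [hAmem]
    rcases hr with rfl | ⟨n, w, ⟨h0, hn2, he⟩, hn, rfl⟩
    · exact Or.inl rfl
    · refine Or.inr ⟨n, fun i => w (n - i), ⟨by simp [hn2], by simp [h0], ?_⟩, hn, ?_⟩
      · intro i hi
        show (p (w (n - i)) (w (n - (i+1)))).isSome
        have e1 : n - i = (n - (i+1)) + 1 := by omega
        rw [hsym, e1]
        exact he (n - (i+1)) (by omega)
      · congr 1
        have step1 : SMC.wt p n (fun i => w (n - i))
            = ∑ i ∈ Finset.range n, SMC.dw p (w (n-1-i)) (w ((n-1-i)+1)) := by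
          unfold SMC.wt
          refine Finset.sum_congr rfl fun i hi => ?_
          rw [Finset.mem_range] at hi
          show SMC.dw p (w (n - i)) (w (n - (i+1))) = _
          rw [show n - i = (n-1-i)+1 by omega, show n - (i+1) = n-1-i by omega, hdsymm]
        rw [step1, Finset.sum_range_reflect (fun j => SMC.dw p (w j) (w (j+1))) n]
        rfl
  have hAeq : ∀ x y : V, A x y = A y x :=
    fun x y => Set.Subset.antisymm (hAsub x y) (hAsub y x)
  have hDsymm : ∀ x y, D x y = D y x := by
    intro x y
    show (if x = y then 0 else sInf (A x y)) = (if y = x then 0 else sInf (A y x))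
    by_cases h : x = y
    · rw [if_pos h, if_pos h.symm]
    · rw [if_neg h, if_neg (Ne.symm h), hAeq]
  -- concatenation
  have hconcat : ∀ (x y z : V) (n1 n2 : ℕ) (w1 w2 : ℕ → V), 1 ≤ n1 → 1 ≤ n2 →
      SMC.Wk p x y n1 w1 → SMC.Wk p y z n2 w2 →
      ∃ w, SMC.Wk p x z (n1 + n2) w ∧
        SMC.wt p (n1+n2) w = SMC.wt p n1 w1 + SMC.wt p n2 w2 := by
    intro x y z n1 n2 w1 w2 h1 h2 hwk1 hwk2
    obtain ⟨ha0, ha1, hae⟩ := hwk1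
    obtain ⟨hb0, hb1, hbe⟩ := hwk2
    set w : ℕ → V := fun k => if k < n1 then w1 k else w2 (k - n1) with hw
    have hbridge : w2 0 = w1 n1 := by rw [hb0, ← ha1]
    have hwval : ∀ k, k < n1 → w k = w1 k := fun k hk => if_pos hk
    have hwval2 : ∀ k, n1 ≤ k → w k = w2 (k - n1) := fun k hk => if_neg (by omega)
    have hwval1' : ∀ k, k ≤ n1 → w k = w1 k := by
      intro k hk
      rcases eq_or_lt_of_le hk with rfl | hk
      · rw [hwval2 k le_rfl, Nat.sub_self, hbridge]
      · exact hwval k hk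
    refine ⟨w, ⟨?_, ?_, ?_⟩, ?_⟩
    · rw [hwval1' 0 (by omega), ha0]
    · rw [hwval2 (n1+n2) (by omega), show n1 + n2 - n1 = n2 by omega, hb1]
    · intro k hk
      rcases Nat.lt_or_ge k n1 with h | h
      · rw [hwval k h, hwval1' (k+1) (by omega)]
        exact hae k h
      · rw [hwval2 k h, hwval2 (k+1) (by omega),
          show k + 1 - n1 = (k - n1) + 1 by omega]
        exact hbe (k - n1) (by omega)
    · unfold SMC.wt
      rw [Finset.range_eq_Ico,
        ← Finset.sum_Ico_consecutive (fun k => SMC.dw p (w k) (w (k+1)))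
          (Nat.zero_le n1) (by omega : n1 ≤ n1 + n2)]
      congr 1
      · rw [← Finset.range_eq_Ico]
        refine Finset.sum_congr rfl fun k hk => ?_
        rw [Finset.mem_range] at hk
        rw [hwval k hk, hwval1' (k+1) (by omega)]
      · rw [Finset.sum_Ico_eq_sum_range,
          show n1 + n2 - n1 = n2 by omega]
        refine Finset.sum_congr rfl fun j hj => ?_
        rw [Finset.mem_range] at hj
        rw [hwval2 (n1+j) (by omega), hwval2 (n1+j+1) (by omega),
          show n1 + j - n1 = j by omega, show n1 + j + 1 - n1 = j + 1 by omega]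
  -- triangle inequality
  have htri : ∀ x y z, D x z ≤ D x y + D y z := by
    intro x y z
    by_cases hxy : x = y
    · have h0' : D x y = 0 := by
        show (if x = y then _ else _) = 0; rw [if_pos hxy]
      rw [h0', hxy]
      linarith [le_refl (D y z)]
    by_cases hyz : y = z
    · have h0' : D y z = 0 := by
        show (if y = z then _ else _) = 0; rw [if_pos hyz]
      rw [h0', ← hyz]
      linarith [le_refl (D x y)]
    by_cases hxz : x = z
    · have h0' : D x z = 0 := by
        show (if x = z then _ else _) = 0; rw [if_pos hxz]
      rw [h0']
      exact add_nonneg (hDnn x y) (hDnn y z)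
    have hDxz : D x z = sInf (A x z) := by
      show (if x = z then _ else _) = _; rw [if_neg hxz]
    have hDxy : D x y = sInf (A x y) := by
      show (if x = y then _ else _) = _; rw [if_neg hxy]
    have hDyz : D y z = sInf (A y z) := by
      show (if y = z then _ else _) = _; rw [if_neg hyz]
    rw [hDxz, hDxy, hDyz]
    have hzM : sInf (A x z) ≤ M := hinfle x z M ((hAmem x z M).mpr (Or.inl rfl))
    have h1 := hmem x y
    have h2 := hmem y z
    rw [hAmem] at h1 h2
    have hnn1 : 0 ≤ sInf (A x y) := by rw [← hDxy]; exact hDnn x y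
    have hnn2 : 0 ≤ sInf (A y z) := by rw [← hDyz]; exact hDnn y z
    rcases h1 with e1 | ⟨n1, w1, hwk1, hn1, e1⟩
    · rw [e1]; linarith
    rcases h2 with e2 | ⟨n2, w2, hwk2, hn2, e2⟩
    · rw [e2]; linarith
    obtain ⟨w, hwk, hwt⟩ := hconcat x y z n1 n2 w1 w2 hn1 hn2 hwk1 hwk2
    have hmemz : min (SMC.wt p (n1+n2) w) M ∈ A x z :=
      (hAmem x z _).mpr (Or.inr ⟨n1+n2, w, hwk, by omega, rfl⟩)
    have hle := hinfle x z _ hmemz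
    rw [hwt] at hle
    rw [e1, e2]
    have hw1 : 0 ≤ SMC.wt p n1 w1 := Finset.sum_nonneg fun i _ => hd0 _ _
    have hw2 : 0 ≤ SMC.wt p n2 w2 := Finset.sum_nonneg fun i _ => hd0 _ _
    refine hle.trans ?_
    rcases le_total (SMC.wt p n1 w1) M with ha | ha <;>
      rcases le_total (SMC.wt p n2 w2) M with hb | hb
    · rw [min_eq_left ha, min_eq_left hb]; exact min_le_left _ _
    · rw [min_eq_left ha, min_eq_right hb]
      have := min_le_right (SMC.wt p n1 w1 + SMC.wt p n2 w2) M
      linarith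
    · rw [min_eq_right ha, min_eq_left hb]
      have := min_le_right (SMC.wt p n1 w1 + SMC.wt p n2 w2) M
      linarith
    · rw [min_eq_right ha, min_eq_right hb]
      have := min_le_right (SMC.wt p n1 w1 + SMC.wt p n2 w2) M
      linarith
  -- extension
  have hext : ∀ x y v, p x y = some v → D x y = v := by
    intro x y v hp
    have hvS : v ∈ S := hS x y v hp
    have hxy : x ≠ y := by
      intro h; rw [h, hirr] at hp; exact Option.some_ne_none v hp.symm
    have hDxy : D x y = sInf (A x y) := by
      show (if x = y then _ else _) = _; rw [if_neg hxy]
    rw [hDxy]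
    have hwk1 : SMC.Wk p x y 1 (fun k => if k = 0 then x else y) := by
      refine ⟨rfl, rfl, ?_⟩
      intro i hi
      have : i = 0 := by omega
      subst this
      show (p x y).isSome
      rw [hp]; rfl
    have hwt1 : SMC.wt p 1 (fun k => if k = 0 then x else y) = v := by
      unfold SMC.wt
      rw [Finset.sum_range_one]
      show SMC.dw p x y = v
      unfold SMC.dw
      rw [hp]; rfl
    have hmemv : v ∈ A x y := (hAmem x y v).mpr
      (Or.inr ⟨1, _, hwk1, le_refl 1, by rw [hwt1, min_eq_left (hleM v hvS)]⟩)
    refine le_antisymm (hinfle x y v hmemv) ?_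
    have h := hmem x y
    rw [hAmem] at h
    rcases h with h | ⟨n, w, hwk, hn, h⟩
    · rw [h]; exact hleM v hvS
    · rw [h]
      exact le_min (SMC.key p hsym hirr hd0 hcyc n x y v w hp hwk) (hleM v hvS)
  refine ⟨D, hDsymm, ?_, hDS, htri, hext⟩
  intro x y
  constructor
  · intro h
    by_contra hxy
    exact absurd h (ne_of_gt (hpos _ (hDS x y hxy)))
  · intro h
    subst h
    show (if x = x then (0:ℝ) else _) = 0
    rw [if_pos rfl]
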